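/- Let S : Set (Set α) be a family of instances and ≻1, ≻2 preference relations on α such that ≻1 and ≻2 are strict partial orders relative to S and ≻1 is contained in ≻2 relative to S. Then for every finite instance r ∈ S: ω_≻1(ω_≻2(r)) = ω_≻2(ω_≻1(r)) = ω_≻2(r). -/

import Mathlib

lemma exists_max_of_finite {α : Type*} (p : α → α → Prop) (D : Set α) (hD : D.Finite) :
    D.Nonempty →
    (∀ a ∈ D, ¬ p a a) →
    (∀ a ∈ D, ∀ b ∈ D, ∀ c ∈ D, p a b → p b c → p a c) →
    ∃ m ∈ D, ∀ u ∈ D, ¬ p u m := by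
  induction D, hD using Set.Finite.induction_on with
  | empty => rintro ⟨x, hx⟩; exact absurd hx (Set.notMem_empty x)
  | @insert a s ha hs ih =>
    intro _ hirr htrans
    have hirr' : ∀ x ∈ s, ¬ p x x := fun x hx => hirr x (Set.mem_insert_of_mem a hx)
    have htrans' : ∀ x ∈ s, ∀ y ∈ s, ∀ z ∈ s, p x y → p y z → p x z :=
      fun x hx y hy z hz => htrans x (Set.mem_insert_of_mem a hx) y
        (Set.mem_insert_of_mem a hy) z (Set.mem_insert_of_mem a hz)
    rcases s.eq_empty_or_nonempty with rfl | hne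
    · refine ⟨a, Set.mem_insert a _, ?_⟩
      rintro u (rfl | hu)
      · exact hirr u (Set.mem_insert u _)
      · exact absurd hu (Set.notMem_empty u)
    · obtain ⟨m, hm, hmax⟩ := ih hne hirr' htrans'
      by_cases hpm : p a m
      · refine ⟨a, Set.mem_insert a _, ?_⟩
        rintro u (rfl | hu)
        · exact hirr u (Set.mem_insert u _)
        · intro hpa
          exact hmax u hu (htrans u (Set.mem_insert_of_mem a hu) a (Set.mem_insert a _) m
            (Set.mem_insert_of_mem a hm) hpa hpm)
      · refine ⟨m, Set.mem_insert_of_mem a hm, ?_⟩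
        rintro u (rfl | hu)
        · exact hpm
        · exact hmax u hu

def winnow {α : Type*} (pref : α → α → Prop) (r : Set α) : Set α :=
  {t ∈ r | ¬ ∃ t' ∈ r, pref t' t}

theorem winnow_nested {α : Type*} (S : Set (Set α)) (pref1 pref2 : α → α → Prop)
    (hspo1 : ∀ r ∈ S, (∀ t ∈ r, ¬ pref1 t t) ∧
      (∀ t1 ∈ r, ∀ t2 ∈ r, ∀ t3 ∈ r, pref1 t1 t2 → pref1 t2 t3 → pref1 t1 t3))
    (hspo2 : ∀ r ∈ S, (∀ t ∈ r, ¬ pref2 t t) ∧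
      (∀ t1 ∈ r, ∀ t2 ∈ r, ∀ t3 ∈ r, pref2 t1 t2 → pref2 t2 t3 → pref2 t1 t3))
    (hcont : ∀ r ∈ S, ∀ t1 ∈ r, ∀ t2 ∈ r, pref1 t1 t2 → pref2 t1 t2) :
    ∀ r ∈ S, r.Finite →
      winnow pref1 (winnow pref2 r) = winnow pref2 (winnow pref1 r) ∧
      winnow pref2 (winnow pref1 r) = winnow pref2 r := by
  intro r hrS hfin
  obtain ⟨hirr1, htr1⟩ := hspo1 r hrS
  obtain ⟨hirr2, htr2⟩ := hspo2 r hrS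
  have hcont' := hcont r hrS
  have hw1sub : winnow pref1 r ⊆ r := fun t ht => ht.1
  have hw2sub : winnow pref2 r ⊆ r := fun t ht => ht.1
  -- ω2(r) ⊆ ω1(r)
  have h21 : winnow pref2 r ⊆ winnow pref1 r := by
    rintro t ⟨htr, hnd⟩
    refine ⟨htr, ?_⟩
    rintro ⟨t', ht', hp⟩
    exact hnd ⟨t', ht', hcont' t' ht' t htr hp⟩
  -- ω2(ω1 r) = ω2 r
  have key : winnow pref2 (winnow pref1 r) = winnow pref2 r := by
    ext t
    constructor
    · rintro ⟨ht1, hnd⟩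
      refine ⟨hw1sub ht1, ?_⟩
      rintro ⟨t', ht', hp⟩
      -- D = dominators of t in r under pref2
      set D : Set α := {s ∈ r | pref2 s t} with hD
      have hDfin : D.Finite := hfin.subset (fun s hs => hs.1)
      have hDne : D.Nonempty := ⟨t', ht', hp⟩
      obtain ⟨m, hmD, hmax⟩ := exists_max_of_finite pref1 D hDfin hDne
        (fun a haD => hirr1 a haD.1)
        (fun a haD b hbD c hcD => htr1 a haD.1 b hbD.1 c hcD.1)
      have hmW1 : m ∈ winnow pref1 r := by
        refine ⟨hmD.1, ?_⟩
        rintro ⟨u, hu, hpu⟩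
        have huD : u ∈ D :=
          ⟨hu, htr2 u hu m hmD.1 t (hw1sub ht1) (hcont' u hu m hmD.1 hpu) hmD.2⟩
        exact hmax u huD hpu
      exact hnd ⟨m, hmW1, hmD.2⟩
    · rintro ⟨htr, hnd⟩
      refine ⟨h21 ⟨htr, hnd⟩, ?_⟩
      rintro ⟨t', ht', hp⟩
      exact hnd ⟨t', hw1sub ht', hp⟩
  -- ω1(ω2 r) = ω2 r
  have key2 : winnow pref1 (winnow pref2 r) = winnow pref2 r := by
    ext t
    constructor
    · rintro ⟨ht2, _⟩; exact ht2
    · rintro ⟨htr, hnd⟩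
      refine ⟨⟨htr, hnd⟩, ?_⟩
      rintro ⟨t', ht', hp⟩
      exact hnd ⟨t', hw2sub ht', hcont' t' (hw2sub ht') t htr hp⟩
  exact ⟨key2.trans key.symm, key⟩
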